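/- Let G be a bicolored multigraph on n vertices with red edge set R and black edge set B, let a, b be positive integers with k = a + b, and suppose |E| = k·n − k. Then G is [a,b]-tight if and only if there exists B' ⊆ B such that the edge set R ∪ B' is the disjoint union of a spanning trees and the edge set B \ B' is the disjoint union of b spanning trees. -/

import Mathlib

open MvPolynomial

/-- The sub-multigraph with edge set `F` (of a multigraph with endpoint maps
`tail`, `head`) is `(k,ℓ)`-sparse: every nonempty vertex subset `W` induces at
most `k·|W| − ℓ` edges of `F`. -/
def SparseOn {V E : Type} [DecidableEq V] (tail head : E → V) (k ℓ : ℤ)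
    (F : Finset E) : Prop :=
  ∀ W : Finset V, W.Nonempty →
    ((F.filter fun e => tail e ∈ W ∧ head e ∈ W).card : ℤ) ≤ k * (W.card : ℤ) - ℓ

/-- The sub-multigraph with edge set `F` of a bicolored multigraph (red edges are
those with `red e = true`) is `[a,b]`-sparse: there is a subset `B'` of the black
edges of `F` such that the red edges of `F` together with `B'` form an `(a,a)`-sparse
multigraph and the remaining black edges of `F` form a `(b,b)`-sparse multigraph. -/
def ABSparseOn {V E : Type} [DecidableEq V] [DecidableEq E] (tail head : E → V)
    (red : E → Bool) (a b : ℕ) (F : Finset E) : Prop :=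
  ∃ B' ⊆ F.filter fun e => red e = false,
    SparseOn tail head (a : ℤ) (a : ℤ) ((F.filter fun e => red e = true) ∪ B') ∧
    SparseOn tail head (b : ℤ) (b : ℤ) ((F.filter fun e => red e = false) \ B')

/-- `T ⊆ E` is a spanning tree: it has `n − 1` edges and the graph on `Fin n`
with edge set `T` is connected. -/
def IsSpanningTree {n : ℕ} {E : Type} (tail head : E → Fin n) (T : Finset E) : Prop :=
  T.card = n - 1 ∧
    (SimpleGraph.fromRel fun u v => ∃ e ∈ T, tail e = u ∧ head e = v).Connected

/-- The edge set `F` is the disjoint union of `a` spanning trees. -/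
def IsTreePartition {n : ℕ} {E : Type} [DecidableEq E] (tail head : E → Fin n)
    (a : ℕ) (F : Finset E) : Prop :=
  ∃ T : Fin a → Finset E, (∀ i, IsSpanningTree tail head (T i)) ∧
    (∀ i j, i ≠ j → Disjoint (T i) (T j)) ∧ Finset.univ.biUnion T = F

/-- `W` is a proper block of a `(k,k)`-graph on `n` vertices: `2 ≤ |W| < n` and the
induced multigraph on `W` is `(k,k)`-tight (i.e. `(k,k)`-sparse with exactly
`k·|W| − k` induced edges). -/
def IsProperBlock {n : ℕ} {E : Type} [Fintype E] (tail head : E → Fin n) (k : ℕ)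
    (W : Finset (Fin n)) : Prop :=
  2 ≤ W.card ∧ W.card < n ∧
    (∀ W' ⊆ W, W'.Nonempty →
      ((Finset.univ.filter fun e => tail e ∈ W' ∧ head e ∈ W').card : ℤ) ≤
        (k : ℤ) * (W'.card : ℤ) - (k : ℤ)) ∧
    ((Finset.univ.filter fun e => tail e ∈ W ∧ head e ∈ W).card : ℤ) =
      (k : ℤ) * (W.card : ℤ) - (k : ℤ)

/-- The vertex type of the contraction `G/H` by the vertex set `W`: the vertices
outside `W` together with a single new vertex (`Sum.inr ()`). -/
abbrev ContrV (n : ℕ) (W : Finset (Fin n)) : Type := {v : Fin n // v ∉ W} ⊕ Unit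

/-- The projection of the vertices of `G` onto the vertices of `G/H`. -/
def contrMap {n : ℕ} (W : Finset (Fin n)) (v : Fin n) : ContrV n W :=
  if h : v ∈ W then Sum.inr () else Sum.inl ⟨v, h⟩

/-- The pure condition of an `[a,b]`-frame: the determinant of the generic rigidity
matrix with the standard tie-down at `u`.  Rows are indexed by edges `E'` together
with `k` tie-down rows, transported to the column index type `V × Fin k` by the
equivalence `σ`.  The row of an edge `e` has the variable `X (var e, i)` in column
`(tail e, i)` and its negative in column `(head e, i)`, except that rows of red edges
vanish in all columns `(·, i)` with `a ≤ i`.  The `i`-th tie-down row has a `1` in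
column `(u, i)` and `0` elsewhere.  The polynomial lives in
`S = MvPolynomial (E × Fin k) ℝ`, the variables of an edge `e` of the (sub)graph
being indexed via `var e : E`. -/
noncomputable def pureCond {E E' V : Type} [Fintype V] [DecidableEq V] (k a : ℕ)
    (tail head : E' → V) (red : E' → Bool) (var : E' → E) (u : V)
    (σ : (E' ⊕ Fin k) ≃ (V × Fin k)) : MvPolynomial (E × Fin k) ℝ :=
  Matrix.det (Matrix.of fun r c : V × Fin k =>
    Sum.elim
      (fun e =>
        if red e = true ∧ a ≤ (c.2 : ℕ) then 0
        else if c.1 = tail e then (X (var e, c.2) : MvPolynomial (E × Fin k) ℝ)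
        else if c.1 = head e then -X (var e, c.2)
        else 0)
      (fun i => if c = (u, i) then 1 else 0)
      (σ.symm r))

/-- The pure condition of a `k`-frame (uncolored body-and-bar setting): the
determinant of the generic rigidity matrix with the standard tie-down at `u`. -/
noncomputable def pureCondBar {E E' V : Type} [Fintype V] [DecidableEq V] (k : ℕ)
    (tail head : E' → V) (var : E' → E) (u : V)
    (σ : (E' ⊕ Fin k) ≃ (V × Fin k)) : MvPolynomial (E × Fin k) ℝ :=
  pureCond k k tail head (fun _ => false) var u σ

/-- The rigidity matrix `M(G(p))` of an `[a,b]`-frame evaluated at the point `p`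
(no tie-down rows). -/
def rigidityMatrixR {E : Type} {n k : ℕ} (a : ℕ) (tail head : E → Fin n)
    (red : E → Bool) (p : E × Fin k → ℝ) : Matrix E (Fin n × Fin k) ℝ :=
  Matrix.of fun e c =>
    if red e = true ∧ a ≤ (c.2 : ℕ) then 0
    else if c.1 = tail e then p (e, c.2)
    else if c.1 = head e then -p (e, c.2)
    else 0

/-- The edge `e` is in the support of the polynomial `f`: some variable `X (e, i)`
occurs in `f`. -/
def InSupport {E : Type} [DecidableEq E] {k : ℕ} (f : MvPolynomial (E × Fin k) ℝ)
    (e : E) : Prop :=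
  ∃ i : Fin k, (e, i) ∈ f.vars

/-- `p` is a generic point of `V(f)`: `f` vanishes at `p` and every polynomial
vanishing at `p` is divisible by `f`. -/
def GenericOn {E : Type} {k : ℕ} (f : MvPolynomial (E × Fin k) ℝ)
    (p : E × Fin k → ℝ) : Prop :=
  eval p f = 0 ∧ ∀ h : MvPolynomial (E × Fin k) ℝ, eval p h = 0 → f ∣ h

/-- A bicolored multigraph is an `[a,b]`-circuit if it is not `[a,b]`-sparse but every
proper subset of its edge set is `[a,b]`-sparse. -/
def ABCircuit {V E : Type} [Fintype E] [DecidableEq V] [DecidableEq E]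
    (tail head : E → V) (red : E → Bool) (a b : ℕ) : Prop :=
  ¬ ABSparseOn tail head red a b (Finset.univ : Finset E) ∧
    ∀ F : Finset E, F ⊂ Finset.univ → ABSparseOn tail head red a b F

/-- An `[a,b]`-graph is irreducible if for every edge `e₀`, adding a new edge parallel
to `e₀` with the same endpoints and color yields an `[a,b]`-circuit. -/
def ABIrreducibleGraph {V E : Type} [Fintype E] [DecidableEq V] [DecidableEq E]
    (tail head : E → V) (red : E → Bool) (a b : ℕ) : Prop :=
  ∀ e₀ : E,
    ABCircuit (Sum.elim tail fun _ : Unit => tail e₀)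
      (Sum.elim head fun _ : Unit => head e₀)
      (Sum.elim red fun _ : Unit => red e₀) a b

/-- The out-degree of the vertex `v` under the orientation `o` (`o e = true` means `e`
is directed from `tail e` to `head e`, `o e = false` the reverse). -/
def outDeg {n : ℕ} {E : Type} [Fintype E] (tail head : E → Fin n) (o : E → Bool)
    (v : Fin n) : ℕ :=
  (Finset.univ.filter fun e =>
    (o e = true ∧ tail e = v) ∨ (o e = false ∧ head e = v)).card

/-- The orientation `o` has a directed cycle (polygon): a nonempty closed walk
traversing distinct edges, each in its assigned direction. -/
def HasDirCycle {n : ℕ} {E : Type} (tail head : E → Fin n) (o : E → Bool) : Prop :=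
  ∃ m : ℕ, 0 < m ∧ ∃ (es : Fin m → E) (vs : Fin (m + 1) → Fin n),
    Function.Injective es ∧ vs 0 = vs (Fin.last m) ∧
    ∀ j : Fin m,
      (o (es j) = true ∧ tail (es j) = vs j.castSucc ∧ head (es j) = vs j.succ) ∨
      (o (es j) = false ∧ head (es j) = vs j.castSucc ∧ tail (es j) = vs j.succ)

set_option linter.unusedSectionVars false

namespace NWaux

variable {n : ℕ} {E : Type} [DecidableEq E] (tl hd : E → Fin n)

/-- one-edge step relation -/
def st (A : Finset E) (u v : Fin n) : Prop :=
  ∃ e ∈ A, (tl e = u ∧ hd e = v) ∨ (tl e = v ∧ hd e = u)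

/-- connectivity via edges in `A` -/
def conn (A : Finset E) : Fin n → Fin n → Prop :=
  Relation.ReflTransGen (st tl hd A)

variable {tl hd}

lemma st_symm {A : Finset E} {u v : Fin n} (h : st tl hd A u v) : st tl hd A v u := by
  obtain ⟨e, he, h | h⟩ := h
  · exact ⟨e, he, Or.inr h⟩
  · exact ⟨e, he, Or.inl h⟩

lemma st_mono {A B : Finset E} (hAB : A ⊆ B) {u v : Fin n} (h : st tl hd A u v) :
    st tl hd B u v := by
  obtain ⟨e, he, h⟩ := h; exact ⟨e, hAB he, h⟩

lemma conn_refl {A : Finset E} (u : Fin n) : conn tl hd A u u := Relation.ReflTransGen.refl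

lemma conn_symm {A : Finset E} {u v : Fin n} (h : conn tl hd A u v) : conn tl hd A v u :=
  by haveI : Std.Symm (st tl hd A) := ⟨fun _ _ => st_symm⟩
     exact Std.Symm.symm (r := Relation.ReflTransGen (st tl hd A)) _ _ h

lemma conn_trans {A : Finset E} {u v w : Fin n} (h : conn tl hd A u v)
    (h' : conn tl hd A v w) : conn tl hd A u w := h.trans h'

lemma conn_mono {A B : Finset E} (hAB : A ⊆ B) {u v : Fin n} (h : conn tl hd A u v) :
    conn tl hd B u v := Relation.ReflTransGen.mono (fun _ _ => st_mono hAB) _ _ h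

lemma conn_single {A : Finset E} {e : E} (he : e ∈ A) : conn tl hd A (tl e) (hd e) :=
  Relation.ReflTransGen.single ⟨e, he, Or.inl ⟨rfl, rfl⟩⟩

lemma conn_of_st {A : Finset E} {u v : Fin n} (h : st tl hd A u v) : conn tl hd A u v :=
  Relation.ReflTransGen.single h

/-- decomposition of connectivity over an inserted edge -/
lemma conn_insert_decomp {A : Finset E} {e : E} {u v : Fin n}
    (h : conn tl hd (insert e A) u v) :
    conn tl hd A u v ∨
      (conn tl hd A u (tl e) ∧ conn tl hd A (hd e) v) ∨
      (conn tl hd A u (hd e) ∧ conn tl hd A (tl e) v) := by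
  induction h with
  | refl => exact Or.inl (conn_refl u)
  | tail h1 h2 ih =>
    rename_i b c
    obtain ⟨f, hf, hor⟩ := h2
    rcases Finset.mem_insert.mp hf with rfl | hfA
    · -- step uses `e`
      rcases hor with ⟨hb, hc⟩ | ⟨hb, hc⟩
      · -- tl e = b, hd e = c
        subst hb; subst hc
        rcases ih with h | ⟨h1', h2'⟩ | ⟨h1', h2'⟩
        · exact Or.inr (Or.inl ⟨h, conn_refl _⟩)
        · exact Or.inr (Or.inl ⟨h1', conn_refl _⟩)
        · exact Or.inl h1'
      · -- tl e = c, hd e = b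
        subst hb; subst hc
        rcases ih with h | ⟨h1', h2'⟩ | ⟨h1', h2'⟩
        · exact Or.inr (Or.inr ⟨h, conn_refl _⟩)
        · exact Or.inl h1'
        · exact Or.inr (Or.inr ⟨h1', conn_refl _⟩)
    · have hbc : conn tl hd A b c := conn_of_st ⟨f, hfA, hor⟩
      rcases ih with h | ⟨h1', h2'⟩ | ⟨h1', h2'⟩
      · exact Or.inl (h.trans hbc)
      · exact Or.inr (Or.inl ⟨h1', h2'.trans hbc⟩)
      · exact Or.inr (Or.inr ⟨h1', h2'.trans hbc⟩)

lemma conn_erase_split {A : Finset E} {f : E} {u v : Fin n} (hf : f ∈ A)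
    (h : conn tl hd A u v) (hnc : ¬ conn tl hd (A.erase f) u v) :
    (conn tl hd (A.erase f) u (tl f) ∧ conn tl hd (A.erase f) (hd f) v) ∨
      (conn tl hd (A.erase f) u (hd f) ∧ conn tl hd (A.erase f) (tl f) v) := by
  rw [← Finset.insert_erase hf] at h
  rcases conn_insert_decomp h with h | h | h
  · exact absurd h hnc
  · exact Or.inl h
  · exact Or.inr h

/-- every edge is a bridge for its own endpoints -/
def IsForest (t h : E → Fin n) (A : Finset E) : Prop :=
  ∀ e ∈ A, ¬ conn t h (A.erase e) (t e) (h e)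

lemma isForest_subset {A B : Finset E} (hBA : B ⊆ A) (hA : IsForest tl hd A) :
    IsForest tl hd B := fun e he hc =>
  hA e (hBA he) (conn_mono (Finset.erase_subset_erase _ hBA) hc)

lemma isForest_empty : IsForest tl hd (∅ : Finset E) := fun e he => absurd he (by simp)

lemma isForest_insert {A : Finset E} {e : E} (hA : IsForest tl hd A)
    (hnc : ¬ conn tl hd A (tl e) (hd e)) : IsForest tl hd (insert e A) := by
  have heA : e ∉ A := fun h => hnc (conn_single h)
  intro f hf
  rcases Finset.mem_insert.mp hf with rfl | hfA
  · rw [Finset.erase_insert heA]; exact hnc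
  · have hne : f ≠ e := fun h => heA (h ▸ hfA)
    rw [Finset.erase_insert_of_ne hne.symm]
    intro hc
    rcases conn_insert_decomp hc with h | ⟨h1, h2⟩ | ⟨h1, h2⟩
    · exact hA f hfA h
    · exact hnc ((conn_symm (conn_mono (Finset.erase_subset _ _) h1)).trans
        ((conn_single hfA).trans (conn_symm (conn_mono (Finset.erase_subset _ _) h2))))
    · exact hnc ((conn_mono (Finset.erase_subset _ _) h2).trans
        ((conn_symm (conn_single hfA)).trans (conn_mono (Finset.erase_subset _ _) h1)))

/-- extract a minimal connecting subset -/
lemma exists_min_conn {A : Finset E} {u v : Fin n} (h : conn tl hd A u v) :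
    ∃ P ⊆ A, conn tl hd P u v ∧ ∀ f ∈ P, ¬ conn tl hd (P.erase f) u v := by
  classical
  suffices H : ∀ (N : ℕ) (A : Finset E), conn tl hd A u v → A.card ≤ N →
      ∃ P ⊆ A, conn tl hd P u v ∧ ∀ f ∈ P, ¬ conn tl hd (P.erase f) u v by
    exact H A.card A h le_rfl
  intro N
  induction N with
  | zero =>
    intro A h hN
    have hA : A = ∅ := Finset.card_eq_zero.mp (Nat.le_zero.mp hN)
    exact ⟨A, Finset.Subset.refl _, h, by intro f hf; rw [hA] at hf; simp at hf⟩
  | succ N ih =>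
    intro A h hN
    by_cases hex : ∃ f ∈ A, conn tl hd (A.erase f) u v
    · obtain ⟨f, hf, hc⟩ := hex
      have hcard : (A.erase f).card ≤ N := by
        rw [Finset.card_erase_of_mem hf]
        have := Finset.card_pos.mpr ⟨f, hf⟩
        omega
      obtain ⟨P, hPA, h1, h2⟩ := ih (A.erase f) hc hcard
      exact ⟨P, hPA.trans (Finset.erase_subset _ _), h1, h2⟩
    · push_neg at hex
      exact ⟨A, Finset.Subset.refl _, h, hex⟩

/-- in a forest, elements of a minimal connecting set are global bridges -/
lemma bridge_of_min {A P : Finset E} (hA : IsForest tl hd A) (hPA : P ⊆ A)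
    {u v : Fin n} (hc : conn tl hd P u v) {f : E} (hf : f ∈ P)
    (hmin : ¬ conn tl hd (P.erase f) u v) : ¬ conn tl hd (A.erase f) u v := by
  intro hC
  have hPsub : P.erase f ⊆ A.erase f := Finset.erase_subset_erase _ hPA
  rcases conn_erase_split hf hc hmin with ⟨h1, h2⟩ | ⟨h1, h2⟩
  · exact hA f (hPA hf) (((conn_symm (conn_mono hPsub h1)).trans hC).trans
      (conn_symm (conn_mono hPsub h2)))
  · exact hA f (hPA hf) ((conn_mono hPsub h2).trans
      ((conn_symm hC).trans (conn_mono hPsub h1)))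

/-- in a forest, two separately removable edges are jointly removable -/
lemma conn_erase_pair {A : Finset E} (hA : IsForest tl hd A) {f g : E} {u v : Fin n}
    (hf : conn tl hd (A.erase f) u v) (hg : conn tl hd (A.erase g) u v) (hfg : f ≠ g) :
    conn tl hd ((A.erase f).erase g) u v := by
  have h : conn tl hd A u v := conn_mono (Finset.erase_subset _ _) hf
  obtain ⟨P, hPA, hPc, hPmin⟩ := exists_min_conn h
  have hfP : f ∉ P := fun hfP => bridge_of_min hA hPA hPc hfP (hPmin f hfP) hf
  have hgP : g ∉ P := fun hgP => bridge_of_min hA hPA hPc hgP (hPmin g hgP) hg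
  refine conn_mono (fun x hx => ?_) hPc
  exact Finset.mem_erase.mpr ⟨fun h' => hgP (h' ▸ hx),
    Finset.mem_erase.mpr ⟨fun h' => hfP (h' ▸ hx), hPA hx⟩⟩

/-- connectivity can be achieved inside the component (edges whose tail connects to `y`) -/
lemma conn_restrict {A : Finset E} {x y : Fin n} (h : conn tl hd A x y)
    [DecidablePred fun f => conn tl hd A (tl f) y] :
    conn tl hd (A.filter fun f => conn tl hd A (tl f) y) x y := by
  induction h using Relation.ReflTransGen.head_induction_on with
  | refl => exact conn_refl y
  | head hst hrest ih =>
    rename_i a c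
    refine Relation.ReflTransGen.head ?_ ih
    obtain ⟨f, hfA, hor⟩ := hst
    have htf : conn tl hd A (tl f) y := by
      rcases hor with ⟨h1, h2⟩ | ⟨h1, h2⟩
      · subst h2; exact (conn_single hfA).trans hrest
      · subst h1; exact hrest
    exact ⟨f, Finset.mem_filter.mpr ⟨hfA, htf⟩, hor⟩

/-- any edge set contains a forest with the same connectivity -/
lemma exists_forest_subconn (A : Finset E) :
    ∃ B ⊆ A, IsForest tl hd B ∧ ∀ u v : Fin n, conn tl hd A u v → conn tl hd B u v := by
  classical
  suffices H : ∀ (N : ℕ) (A : Finset E), A.card ≤ N →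
      ∃ B ⊆ A, IsForest tl hd B ∧ ∀ u v : Fin n, conn tl hd A u v → conn tl hd B u v by
    exact H A.card A le_rfl
  intro N
  induction N with
  | zero =>
    intro A hN
    have hA : A = ∅ := Finset.card_eq_zero.mp (Nat.le_zero.mp hN)
    subst hA
    exact ⟨∅, Finset.Subset.refl _, isForest_empty, fun u v h => h⟩
  | succ N ih =>
    intro A hN
    by_cases hA : IsForest tl hd A
    · exact ⟨A, Finset.Subset.refl _, hA, fun u v h => h⟩
    · simp only [IsForest, not_forall] at hA
      obtain ⟨e, he, hc⟩ := hA
      have hc' : ¬¬ conn tl hd (A.erase e) (tl e) (hd e) := hc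
      rw [not_not] at hc'
      have hall : ∀ u v : Fin n, conn tl hd A u v → conn tl hd (A.erase e) u v := by
        intro u v h
        rw [← Finset.insert_erase he] at h
        rcases conn_insert_decomp h with h | ⟨h1, h2⟩ | ⟨h1, h2⟩
        · exact h
        · exact (h1.trans hc').trans h2
        · exact (h1.trans (conn_symm hc')).trans h2
      have hcard : (A.erase e).card ≤ N := by
        rw [Finset.card_erase_of_mem he]
        have := Finset.card_pos.mpr ⟨e, he⟩
        omega
      obtain ⟨B, hBA, hB, hconn⟩ := ih (A.erase e) hcard
      exact ⟨B, hBA.trans (Finset.erase_subset _ _), hB,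
        fun u v h => hconn u v (hall u v h)⟩

/-- if an edge is non-bridging for its own ends, it can be dropped -/
lemma conn_drop {A : Finset E} {e : E} (he : e ∈ A)
    (hc : conn tl hd (A.erase e) (tl e) (hd e)) {u v : Fin n} (h : conn tl hd A u v) :
    conn tl hd (A.erase e) u v := by
  rw [← Finset.insert_erase he] at h
  rcases conn_insert_decomp h with h | ⟨h1, h2⟩ | ⟨h1, h2⟩
  · exact h
  · exact (h1.trans hc).trans h2
  · exact (h1.trans (conn_symm hc)).trans h2

/-- a set `U` all of whose points connect to `u0` through a forest `A` has at most
`|A| + 1` points -/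
lemma forest_conn_card : ∀ (N : ℕ) (A : Finset E), A.card ≤ N → IsForest tl hd A →
    ∀ (U : Finset (Fin n)) (u0 : Fin n), u0 ∈ U → (∀ u ∈ U, conn tl hd A u u0) →
    U.card ≤ A.card + 1 := by
  classical
  intro N
  induction N with
  | zero =>
    intro A hN _ U u0 hu0 hconn
    have hA : A = ∅ := Finset.card_eq_zero.mp (Nat.le_zero.mp hN)
    subst hA
    have : U ⊆ {u0} := by
      intro u hu
      have h := hconn u hu
      have : u = u0 := by
        cases (Relation.reflTransGen_iff_eq (by rintro w ⟨e, he, _⟩; simp at he)).mp h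
        rfl
      simp [this]
    simpa using Finset.card_le_card this
  | succ N ih =>
    intro A hN hA U u0 hu0 hconn
    by_cases hU : ∀ u ∈ U, u = u0
    · have : U ⊆ {u0} := fun u hu => by simp [hU u hu]
      have := Finset.card_le_card this
      simp only [Finset.card_singleton] at this
      omega
    · push_neg at hU
      obtain ⟨v, hv, hvu0⟩ := hU
      -- find an edge at u0
      have h0 : conn tl hd A u0 v := conn_symm (hconn v hv)
      rcases Relation.ReflTransGen.cases_head h0 with heq | ⟨b, hst, _⟩
      · exact absurd heq.symm hvu0
      obtain ⟨e, he, hor⟩ := hst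
      set A' := A.erase e with hA'
      have hbr0 : ¬ conn tl hd A' (tl e) (hd e) := hA e he
      have hbr : ¬ conn tl hd A' u0 b := by
        rcases hor with ⟨h1, h2⟩ | ⟨h1, h2⟩
        · rw [← h1, ← h2]; exact hbr0
        · rw [← h1, ← h2]; exact fun hcc => hbr0 (conn_symm hcc)
      set U1 := U.filter (fun u => conn tl hd A' u u0) with hU1
      set U2 := U \ U1 with hU2def
      have hu01 : u0 ∈ U1 := Finset.mem_filter.mpr ⟨hu0, conn_refl u0⟩
      have hU2conn : ∀ u ∈ U2, conn tl hd A' u b := by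
        intro u hu
        have huU : u ∈ U := (Finset.mem_sdiff.mp hu).1
        have hunc : ¬ conn tl hd A' u u0 := by
          intro hcc
          exact (Finset.mem_sdiff.mp hu).2 (Finset.mem_filter.mpr ⟨huU, hcc⟩)
        have h := hconn u huU
        rw [← Finset.insert_erase he] at h
        rcases conn_insert_decomp h with h | ⟨h1, h2⟩ | ⟨h1, h2⟩
        · exact absurd h hunc
        · rcases hor with ⟨he1, he2⟩ | ⟨he1, he2⟩
          · rw [he1] at h1; exact absurd h1 hunc
          · rw [he1] at h1; exact h1
        · rcases hor with ⟨he1, he2⟩ | ⟨he1, he2⟩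
          · rw [he2] at h1; exact h1
          · rw [he2] at h1; exact absurd h1 hunc
      set A1 := A'.filter (fun f => conn tl hd A' (tl f) u0) with hA1
      set A2 := A'.filter (fun f => conn tl hd A' (tl f) b) with hA2
      have hdisj : Disjoint A1 A2 := by
        rw [Finset.disjoint_left]
        intro f hf1 hf2
        exact hbr ((conn_symm (Finset.mem_filter.mp hf1).2).trans
          (Finset.mem_filter.mp hf2).2)
      have hcardA : A.card = A'.card + 1 := by
        rw [hA', Finset.card_erase_of_mem he]
        have := Finset.card_pos.mpr ⟨e, he⟩
        omega
      have hsubA1 : A1 ⊆ A' := by rw [hA1]; exact Finset.filter_subset _ _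
      have hsubA2 : A2 ⊆ A' := by rw [hA2]; exact Finset.filter_subset _ _
      have hcard1 : A1.card ≤ N := by
        have h1 : A1.card ≤ A'.card := Finset.card_le_card hsubA1
        omega
      have hcard2 : A2.card ≤ N := by
        have h1 : A2.card ≤ A'.card := Finset.card_le_card hsubA2
        omega
      have hF1 : IsForest tl hd A1 :=
        isForest_subset (hsubA1.trans (Finset.erase_subset _ _)) hA
      have hF2 : IsForest tl hd A2 :=
        isForest_subset (hsubA2.trans (Finset.erase_subset _ _)) hA
      have hc1 : U1.card ≤ A1.card + 1 := by
        refine ih A1 hcard1 hF1 U1 u0 hu01 ?_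
        intro u hu
        exact conn_restrict (Finset.mem_filter.mp hu).2
      have hc2 : (insert b U2).card ≤ A2.card + 1 := by
        refine ih A2 hcard2 hF2 (insert b U2) b (Finset.mem_insert_self _ _) ?_
        intro u hu
        rcases Finset.mem_insert.mp hu with rfl | hu
        · exact conn_refl u
        · exact conn_restrict (hU2conn u hu)
      have hc2' : U2.card ≤ A2.card + 1 :=
        le_trans (Finset.card_le_card (Finset.subset_insert _ _)) hc2
      have hsubU1 : U1 ⊆ U := by rw [hU1]; exact Finset.filter_subset _ _
      have hUsum : U2.card + U1.card = U.card := by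
        rw [hU2def]; exact Finset.card_sdiff_add_card_eq_card hsubU1
      have hAsum : A1.card + A2.card ≤ A'.card := by
        rw [← Finset.card_union_of_disjoint hdisj]
        exact Finset.card_le_card (Finset.union_subset hsubA1 hsubA2)
      omega

/-- general version: drop the forest hypothesis -/
lemma conn_card_le {A : Finset E} {U : Finset (Fin n)} {u0 : Fin n} (hu0 : u0 ∈ U)
    (hconn : ∀ u ∈ U, conn tl hd A u u0) : U.card ≤ A.card + 1 := by
  obtain ⟨B, hBA, hB, hBconn⟩ := exists_forest_subconn (tl := tl) (hd := hd) A
  calc U.card ≤ B.card + 1 :=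
        forest_conn_card B.card B le_rfl hB U u0 hu0 fun u hu => hBconn _ _ (hconn u hu)
    _ ≤ A.card + 1 := by have := Finset.card_le_card hBA; omega

/-- a forest induced inside a vertex set `W` has fewer than `|W|` edges -/
lemma forest_card_lt : ∀ (N : ℕ) (A : Finset E), A.card ≤ N → IsForest tl hd A →
    ∀ W : Finset (Fin n), (∀ f ∈ A, tl f ∈ W ∧ hd f ∈ W) → W.Nonempty →
    A.card + 1 ≤ W.card := by
  classical
  intro N
  induction N with
  | zero =>
    intro A hN _ W _ hW
    have hA : A = ∅ := Finset.card_eq_zero.mp (Nat.le_zero.mp hN)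
    subst hA
    simpa using Finset.card_pos.mpr hW
  | succ N ih =>
    intro A hN hA W hind hW
    rcases Finset.eq_empty_or_nonempty A with rfl | ⟨e, he⟩
    · simpa using Finset.card_pos.mpr hW
    set A' := A.erase e with hA'def
    have hbr : ¬ conn tl hd A' (tl e) (hd e) := hA e he
    set W1 := W.filter (fun w => conn tl hd A' w (tl e)) with hW1
    set W2 := W \ W1 with hW2
    have hte : tl e ∈ W1 := Finset.mem_filter.mpr ⟨(hind e he).1, conn_refl _⟩
    have hhe : hd e ∈ W2 := by
      refine Finset.mem_sdiff.mpr ⟨(hind e he).2, fun hmem => ?_⟩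
      exact hbr (conn_symm (Finset.mem_filter.mp hmem).2)
    set A1 := A'.filter (fun f => conn tl hd A' (tl f) (tl e)) with hA1
    set A2 := A' \ A1 with hA2
    have hind1 : ∀ f ∈ A1, tl f ∈ W1 ∧ hd f ∈ W1 := by
      intro f hf
      obtain ⟨hfA', hfc⟩ := Finset.mem_filter.mp hf
      have hfA : f ∈ A := Finset.erase_subset _ _ hfA'
      constructor
      · exact Finset.mem_filter.mpr ⟨(hind f hfA).1, hfc⟩
      · exact Finset.mem_filter.mpr ⟨(hind f hfA).2,
          (conn_symm (conn_single hfA')).trans hfc⟩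
    have hind2 : ∀ f ∈ A2, tl f ∈ W2 ∧ hd f ∈ W2 := by
      intro f hf
      obtain ⟨hfA', hfn⟩ := Finset.mem_sdiff.mp hf
      have hfc : ¬ conn tl hd A' (tl f) (tl e) := fun hcc =>
        hfn (Finset.mem_filter.mpr ⟨hfA', hcc⟩)
      have hfA : f ∈ A := Finset.erase_subset _ _ hfA'
      constructor
      · exact Finset.mem_sdiff.mpr ⟨(hind f hfA).1, fun hmem =>
          hfc (Finset.mem_filter.mp hmem).2⟩
      · refine Finset.mem_sdiff.mpr ⟨(hind f hfA).2, fun hmem => ?_⟩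
        exact hfc ((conn_single hfA').trans (Finset.mem_filter.mp hmem).2)
    have hcardA : A.card = A'.card + 1 := by
      rw [hA'def, Finset.card_erase_of_mem he]
      have := Finset.card_pos.mpr ⟨e, he⟩
      omega
    have hsubA1 : A1 ⊆ A' := by rw [hA1]; exact Finset.filter_subset _ _
    have hsubA2 : A2 ⊆ A' := by rw [hA2]; exact Finset.sdiff_subset
    have hcardA12 : A2.card + A1.card = A'.card := by
      rw [hA2]; exact Finset.card_sdiff_add_card_eq_card hsubA1
    have hle1 : A1.card ≤ A'.card := Finset.card_le_card hsubA1
    have hle2 : A2.card ≤ A'.card := Finset.card_le_card hsubA2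
    have h1 : A1.card + 1 ≤ W1.card := by
      refine ih A1 (by omega) (isForest_subset
        (hsubA1.trans (Finset.erase_subset _ _)) hA) W1 hind1 ⟨_, hte⟩
    have h2 : A2.card + 1 ≤ W2.card := by
      refine ih A2 (by omega) (isForest_subset
        (hsubA2.trans (Finset.erase_subset _ _)) hA) W2 hind2 ⟨_, hhe⟩
    have hsubW1 : W1 ⊆ W := by rw [hW1]; exact Finset.filter_subset _ _
    have hWsum : W2.card + W1.card = W.card := by
      rw [hW2]; exact Finset.card_sdiff_add_card_eq_card hsubW1
    omega

lemma forest_card_le {A : Finset E} (hA : IsForest tl hd A) {W : Finset (Fin n)}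
    (hind : ∀ f ∈ A, tl f ∈ W ∧ hd f ∈ W) (hW : W.Nonempty) : A.card + 1 ≤ W.card :=
  forest_card_lt A.card A le_rfl hA W hind hW

/-- a spanning connected edge set with `n - 1` edges is a forest -/
lemma isForest_of_conn_card {T : Finset E} (hconn : ∀ u v : Fin n, conn tl hd T u v)
    (hcard : T.card + 1 = n) : IsForest tl hd T := by
  intro e he hc
  have hall : ∀ u ∈ (Finset.univ : Finset (Fin n)), conn tl hd (T.erase e) u (tl e) :=
    fun u _ => conn_drop he hc (hconn u (tl e))
  have := conn_card_le (Finset.mem_univ (tl e)) hall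
  rw [Finset.card_univ, Fintype.card_fin, Finset.card_erase_of_mem he] at this
  have := Finset.card_pos.mpr ⟨e, he⟩
  omega

/-- a forest with `n - 1` edges is spanning connected -/
lemma conn_univ_of_forest_card {T : Finset E} (hF : IsForest tl hd T)
    (hcard : T.card + 1 = n) : ∀ u v : Fin n, conn tl hd T u v := by
  classical
  by_contra hcon
  push_neg at hcon
  obtain ⟨u, v, huv⟩ := hcon
  set W1 := Finset.univ.filter (fun w : Fin n => conn tl hd T w u) with hW1
  set W2 := (Finset.univ : Finset (Fin n)) \ W1 with hW2
  have hu : u ∈ W1 := Finset.mem_filter.mpr ⟨Finset.mem_univ _, conn_refl _⟩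
  have hv : v ∈ W2 := by
    refine Finset.mem_sdiff.mpr ⟨Finset.mem_univ _, fun hmem => ?_⟩
    exact huv (conn_symm (Finset.mem_filter.mp hmem).2)
  set F1 := T.filter (fun f => conn tl hd T (tl f) u) with hF1
  set F2 := T \ F1 with hF2
  have hsubF1 : F1 ⊆ T := by rw [hF1]; exact Finset.filter_subset _ _
  have hsubF2 : F2 ⊆ T := by rw [hF2]; exact Finset.sdiff_subset
  have hind1 : ∀ f ∈ F1, tl f ∈ W1 ∧ hd f ∈ W1 := by
    intro f hf
    obtain ⟨hfT, hfc⟩ := Finset.mem_filter.mp hf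
    exact ⟨Finset.mem_filter.mpr ⟨Finset.mem_univ _, hfc⟩,
      Finset.mem_filter.mpr ⟨Finset.mem_univ _, (conn_symm (conn_single hfT)).trans hfc⟩⟩
  have hind2 : ∀ f ∈ F2, tl f ∈ W2 ∧ hd f ∈ W2 := by
    intro f hf
    obtain ⟨hfT, hfn⟩ := Finset.mem_sdiff.mp hf
    have hfc : ¬ conn tl hd T (tl f) u := fun hcc =>
      hfn (Finset.mem_filter.mpr ⟨hfT, hcc⟩)
    refine ⟨Finset.mem_sdiff.mpr ⟨Finset.mem_univ _, fun hmem =>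
      hfc (Finset.mem_filter.mp hmem).2⟩,
      Finset.mem_sdiff.mpr ⟨Finset.mem_univ _, fun hmem => ?_⟩⟩
    exact hfc ((conn_single hfT).trans (Finset.mem_filter.mp hmem).2)
  have h1 : F1.card + 1 ≤ W1.card :=
    forest_card_le (isForest_subset hsubF1 hF) hind1 ⟨_, hu⟩
  have h2 : F2.card + 1 ≤ W2.card :=
    forest_card_le (isForest_subset hsubF2 hF) hind2 ⟨_, hv⟩
  have hFsum : F2.card + F1.card = T.card := by
    rw [hF2]; exact Finset.card_sdiff_add_card_eq_card hsubF1
  have hWsum : W2.card + W1.card = n := by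
    have h := Finset.card_sdiff_add_card_eq_card (Finset.subset_univ W1)
    rw [← hW2, Finset.card_univ, Fintype.card_fin] at h
    exact h
  omega

/-- translation to the `SimpleGraph.fromRel` formulation -/
lemma conn_iff_reachable (hlt : ∀ e, tl e < hd e) (T : Finset E) (u v : Fin n) :
    conn tl hd T u v ↔
      (SimpleGraph.fromRel fun a b => ∃ e ∈ T, tl e = a ∧ hd e = b).Reachable u v := by
  rw [SimpleGraph.reachable_iff_reflTransGen]
  constructor
  · refine Relation.ReflTransGen.mono ?_ _ _
    intro a b hab
    obtain ⟨e, he, h⟩ := hab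
    rw [SimpleGraph.fromRel_adj]
    rcases h with ⟨h1, h2⟩ | ⟨h1, h2⟩
    · exact ⟨by rw [← h1, ← h2]; exact (hlt e).ne, Or.inl ⟨e, he, h1, h2⟩⟩
    · exact ⟨by rw [← h1, ← h2]; exact (hlt e).ne', Or.inr ⟨e, he, h1, h2⟩⟩
  · refine Relation.ReflTransGen.mono ?_ _ _
    intro a b hab
    rw [SimpleGraph.fromRel_adj] at hab
    obtain ⟨-, ⟨e, he, h1, h2⟩ | ⟨e, he, h1, h2⟩⟩ := hab
    · exact ⟨e, he, Or.inl ⟨h1, h2⟩⟩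
    · exact ⟨e, he, Or.inr ⟨h1, h2⟩⟩

/-- The exchange chain lemma: given edge-disjoint forests, a free edge `d 0`, and a
chain of exchanges ending in a forest that can absorb the last edge, the whole
family can be reorganized to absorb `d 0`. -/
lemma chain_aug {k : ℕ} :
    ∀ (m : ℕ) (F : Fin k → Finset E), (∀ i, IsForest tl hd (F i)) →
    (∀ i j, i ≠ j → Disjoint (F i) (F j)) →
    ∀ (d : ℕ → E) (j : ℕ → Fin k) (i : Fin k),
    (∀ i', d 0 ∉ F i') →
    (∀ t < m, conn tl hd (F (j t)) (tl (d t)) (hd (d t))) →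
    (∀ t < m, d (t + 1) ∈ F (j t)) →
    (∀ t < m, ¬ conn tl hd ((F (j t)).erase (d (t + 1))) (tl (d t)) (hd (d t))) →
    (∀ t s, t + 1 < s → s ≤ m → t < m → d s ∈ F (j t) →
      conn tl hd ((F (j t)).erase (d s)) (tl (d t)) (hd (d t))) →
    (∀ t s, t ≤ m → s ≤ m → d t = d s → t = s) →
    ¬ conn tl hd (F i) (tl (d m)) (hd (d m)) →
    ∃ G : Fin k → Finset E, (∀ i', IsForest tl hd (G i')) ∧
      (∀ i' j', i' ≠ j' → Disjoint (G i') (G j')) ∧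
      Finset.univ.biUnion G = insert (d 0) (Finset.univ.biUnion F) := by
  classical
  intro m
  induction m with
  | zero =>
    intro F hF hdisj d j i hfree _ _ _ _ _ hbad
    refine ⟨fun i' => if i' = i then insert (d 0) (F i) else F i', ?_, ?_, ?_⟩
    · intro i'
      by_cases h : i' = i
      · simp only [h, if_pos rfl]
        exact isForest_insert (hF i) hbad
      · simp only [if_neg h]; exact hF i'
    · intro i' j' hne
      by_cases h1 : i' = i <;> by_cases h2 : j' = i
      · exact absurd (h1.trans h2.symm) hne
      · simp only [h1, if_pos rfl, if_neg h2]
        exact Finset.disjoint_insert_left.mpr ⟨hfree j', h1 ▸ hdisj i' j' hne⟩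
      · simp only [h2, if_neg h1, if_pos rfl]
        exact Finset.disjoint_insert_right.mpr ⟨hfree i', h2 ▸ hdisj i' j' hne⟩
      · simp only [if_neg h1, if_neg h2]; exact hdisj i' j' hne
    · ext x
      simp only [Finset.mem_biUnion, Finset.mem_univ, true_and, Finset.mem_insert]
      constructor
      · rintro ⟨i', hx⟩
        by_cases h : i' = i
        · rw [h, if_pos rfl, Finset.mem_insert] at hx
          rcases hx with rfl | hx
          · exact Or.inl rfl
          · exact Or.inr ⟨i, hx⟩
        · rw [if_neg h] at hx
          exact Or.inr ⟨i', hx⟩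
      · rintro (rfl | ⟨i', hx⟩)
        · exact ⟨i, by rw [if_pos rfl]; exact Finset.mem_insert_self _ _⟩
        · by_cases h : i' = i
          · exact ⟨i, by rw [if_pos rfl]; exact Finset.mem_insert_of_mem (h ▸ hx)⟩
          · exact ⟨i', by rw [if_neg h]; exact hx⟩
  | succ m ih =>
    intro F hF hdisj d j i hfree hstepc hstepm hstepb hnosh hinj hbad
    -- the index of the forest owning d (m+1)
    have hjm : d (m + 1) ∈ F (j m) := hstepm m (Nat.lt_succ_self m)
    have hine : i ≠ j m := by
      rintro rfl
      exact hbad (conn_single hjm)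
    -- move d_(m+1) from F (j m) into F i
    set F' : Fin k → Finset E := fun i' =>
      if i' = i then insert (d (m + 1)) (F i)
      else if i' = j m then (F (j m)).erase (d (m + 1)) else F i' with hF'def
    have hF'i : F' i = insert (d (m + 1)) (F i) := by simp [hF'def]
    have hF'jm : F' (j m) = (F (j m)).erase (d (m + 1)) := by
      simp [hF'def, hine.symm]
    have hF'other : ∀ i', i' ≠ i → i' ≠ j m → F' i' = F i' := by
      intro i' h1 h2; simp [hF'def, h1, h2]
    have hdm1 : ∀ i', i' ≠ j m → d (m + 1) ∉ F i' := by
      intro i' h1 hmem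
      exact (Finset.disjoint_left.mp (hdisj i' (j m) h1) hmem) hjm
    -- injectivity facts
    have hne_d : ∀ t, t ≤ m → d t ≠ d (m + 1) := by
      intro t ht h
      have := hinj t (m + 1) (by omega) le_rfl h
      omega
    -- forests
    have hF' : ∀ i', IsForest tl hd (F' i') := by
      intro i'
      by_cases h1 : i' = i
      · rw [h1, hF'i]; exact isForest_insert (hF i) hbad
      · by_cases h2 : i' = j m
        · rw [h2, hF'jm]; exact isForest_subset (Finset.erase_subset _ _) (hF (j m))
        · rw [hF'other i' h1 h2]; exact hF i'
    -- disjointness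
    have hdisj' : ∀ i' j', i' ≠ j' → Disjoint (F' i') (F' j') := by
      have key : ∀ i', i' ≠ i → Disjoint (insert (d (m + 1)) (F i)) (F' i') := by
        intro i' h1
        by_cases h2 : i' = j m
        · rw [h2, hF'jm]
          refine Finset.disjoint_insert_left.mpr ⟨Finset.notMem_erase _ _, ?_⟩
          exact Finset.disjoint_of_subset_right (Finset.erase_subset _ _)
            (hdisj i (j m) hine)
        · rw [hF'other i' h1 h2]
          exact Finset.disjoint_insert_left.mpr ⟨hdm1 i' h2, hdisj i i' (Ne.symm h1)⟩
      intro i' j' hne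
      by_cases h1 : i' = i
      · rw [h1, hF'i]; exact key j' (h1 ▸ hne).symm
      · by_cases h2 : j' = i
        · rw [h2, hF'i]; exact ((key i' h1).symm)
        · have hsub : ∀ i'', i'' ≠ i → F' i'' ⊆ F i'' := by
            intro i'' hi''
            by_cases h3 : i'' = j m
            · rw [h3, hF'jm]; exact Finset.erase_subset _ _
            · rw [hF'other i'' hi'' h3]
          exact Finset.disjoint_of_subset_left (hsub i' h1)
            (Finset.disjoint_of_subset_right (hsub j' h2) (hdisj i' j' hne))
    -- union is unchanged
    have hunion : Finset.univ.biUnion F' = Finset.univ.biUnion F := by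
      ext x
      simp only [Finset.mem_biUnion, Finset.mem_univ, true_and]
      constructor
      · rintro ⟨i', hx⟩
        by_cases h1 : i' = i
        · rw [h1, hF'i, Finset.mem_insert] at hx
          rcases hx with rfl | hx
          · exact ⟨j m, hjm⟩
          · exact ⟨i, hx⟩
        · by_cases h2 : i' = j m
          · rw [h2, hF'jm] at hx
            exact ⟨j m, Finset.erase_subset _ _ hx⟩
          · rw [hF'other i' h1 h2] at hx; exact ⟨i', hx⟩
      · rintro ⟨i', hx⟩
        by_cases h2 : i' = j m
        · subst h2
          by_cases h3 : x = d (m + 1)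
          · exact ⟨i, by rw [hF'i]; exact h3 ▸ Finset.mem_insert_self _ _⟩
          · exact ⟨j m, by rw [hF'jm]; exact Finset.mem_erase.mpr ⟨h3, hx⟩⟩
        · by_cases h1 : i' = i
          · exact ⟨i, by rw [hF'i]; exact Finset.mem_insert_of_mem (h1 ▸ hx)⟩
          · exact ⟨i', by rw [hF'other i' h1 h2]; exact hx⟩
    -- apply the induction hypothesis with the new family and bad pair (d m, j m)
    have hmain := ih F' hF' hdisj' d j (j m) ?_ ?_ ?_ ?_ ?_ ?_ ?_
    · obtain ⟨G, hG1, hG2, hG3⟩ := hmain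
      exact ⟨G, hG1, hG2, by rw [hG3, hunion]⟩
    · -- free
      intro i'
      by_cases h1 : i' = i
      · rw [h1, hF'i, Finset.mem_insert]
        rintro (h | h)
        · exact hne_d 0 (Nat.zero_le m) h
        · exact hfree i h
      · by_cases h2 : i' = j m
        · rw [h2, hF'jm]
          exact fun h => hfree (j m) (Finset.erase_subset _ _ h)
        · rw [hF'other i' h1 h2]; exact hfree i'
    · -- step connectivity
      intro t ht
      have ht' : t < m + 1 := by omega
      by_cases h1 : j t = i
      · rw [h1, hF'i]
        exact conn_mono (Finset.subset_insert _ _) (h1 ▸ hstepc t ht')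
      · by_cases h2 : j t = j m
        · rw [h2, hF'jm]
          have := hnosh t (m + 1) (by omega) le_rfl ht' (h2 ▸ hjm)
          rwa [h2] at this
        · rw [hF'other _ h1 h2]; exact hstepc t ht'
    · -- step membership
      intro t ht
      have ht' : t < m + 1 := by omega
      have hmem := hstepm t ht'
      by_cases h1 : j t = i
      · rw [h1, hF'i]
        exact Finset.mem_insert_of_mem (h1 ▸ hmem)
      · by_cases h2 : j t = j m
        · rw [h2, hF'jm]
          exact Finset.mem_erase.mpr ⟨hne_d (t + 1) (by omega), h2 ▸ hmem⟩
        · rw [hF'other _ h1 h2]; exact hmem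
    · -- step bridges
      intro t ht
      have ht' : t < m + 1 := by omega
      by_cases h1 : j t = i
      · rw [h1, hF'i]
        rw [Finset.erase_insert_of_ne (hne_d (t + 1) (by omega)).symm]
        intro hc
        rcases conn_insert_decomp hc with h | ⟨hc1, hc2⟩ | ⟨hc1, hc2⟩
        · exact (h1 ▸ hstepb t ht') h
        · refine hbad ?_
          have e1 : conn tl hd (F i) (tl (d (m + 1))) (tl (d t)) :=
            conn_symm (conn_mono (Finset.erase_subset _ _) hc1)
          have e2 : conn tl hd (F i) (tl (d t)) (hd (d t)) := h1 ▸ hstepc t ht'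
          have e3 : conn tl hd (F i) (hd (d t)) (hd (d (m + 1))) :=
            conn_symm (conn_mono (Finset.erase_subset _ _) hc2)
          exact (e1.trans e2).trans e3
        · refine hbad ?_
          have e1 : conn tl hd (F i) (tl (d (m + 1))) (hd (d t)) :=
            conn_mono (Finset.erase_subset _ _) hc2
          have e2 : conn tl hd (F i) (hd (d t)) (tl (d t)) :=
            conn_symm (h1 ▸ hstepc t ht')
          have e3 : conn tl hd (F i) (tl (d t)) (hd (d (m + 1))) :=
            conn_mono (Finset.erase_subset _ _) hc1
          exact (e1.trans e2).trans e3
      · by_cases h2 : j t = j m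
        · rw [h2, hF'jm]
          intro hc
          refine (h2 ▸ hstepb t ht') ?_
          refine conn_mono ?_ hc
          intro x hx
          obtain ⟨hx1, hx2⟩ := Finset.mem_erase.mp hx
          exact Finset.mem_erase.mpr ⟨hx1, (Finset.mem_erase.mp hx2).2⟩
        · rw [hF'other _ h1 h2]; exact hstepb t ht'
    · -- no shortcuts
      intro t s hts hsm htm hmem
      have ht' : t < m + 1 := by omega
      have hs' : s ≤ m + 1 := by omega
      by_cases h1 : j t = i
      · rw [h1, hF'i] at hmem ⊢
        have hmem' : d s ∈ F i := by
          rcases Finset.mem_insert.mp hmem with h | h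
          · exact absurd (hinj s (m + 1) hs' le_rfl h) (by omega)
          · exact h
        have := hnosh t s hts hs' ht' (h1 ▸ hmem')
        rw [h1] at this
        rw [Finset.erase_insert_of_ne (hne_d s (by omega)).symm]
        exact conn_mono (Finset.insert_subset_insert _ (Finset.erase_subset_erase _
          (Finset.Subset.refl _))) (conn_mono (Finset.subset_insert _ _) this)
      · by_cases h2 : j t = j m
        · rw [h2, hF'jm] at hmem ⊢
          have hmem' : d s ∈ F (j m) := Finset.erase_subset _ _ hmem
          have hA := hF (j m)
          have c1 : conn tl hd ((F (j m)).erase (d s)) (tl (d t)) (hd (d t)) := by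
            have := hnosh t s hts hs' ht' (h2 ▸ hmem')
            rwa [h2] at this
          have c2 : conn tl hd ((F (j m)).erase (d (m + 1))) (tl (d t)) (hd (d t)) := by
            have := hnosh t (m + 1) (by omega) le_rfl ht' (h2 ▸ hjm)
            rwa [h2] at this
          have := conn_erase_pair hA c2 c1 (fun h => hne_d s (by omega) h.symm)
          exact this
        · rw [hF'other _ h1 h2] at hmem ⊢
          exact hnosh t s hts hs' ht' hmem
    · -- injectivity
      intro t s ht hs
      exact hinj t s (by omega) (by omega)
    · -- bad pair for the reduced chain
      rw [hF'jm]
      exact hstepb m (Nat.lt_succ_self m)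

/-- The augmentation lemma: under the sparsity count, a free edge can be absorbed
into a family of edge-disjoint forests. -/
lemma augment {k : ℕ} [Fintype E] (F : Fin k → Finset E)
    (hF : ∀ i, IsForest tl hd (F i)) (hdisj : ∀ i j, i ≠ j → Disjoint (F i) (F j))
    (e0 : E) (hfree : ∀ i, e0 ∉ F i)
    (hsp : ∀ W : Finset (Fin n), W.Nonempty →
      (((insert e0 (Finset.univ.biUnion F)).filter
          fun e => tl e ∈ W ∧ hd e ∈ W).card : ℤ) ≤ k * W.card - k) :
    ∃ G : Fin k → Finset E, (∀ i, IsForest tl hd (G i)) ∧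
      (∀ i j, i ≠ j → Disjoint (G i) (G j)) ∧
      Finset.univ.biUnion G = insert e0 (Finset.univ.biUnion F) := by
  classical
  -- iterated bridge-closure levels
  let Dp : ℕ → Finset E := fun t => Nat.rec {e0}
    (fun _ D => D ∪ Finset.univ.filter (fun f => ∃ e ∈ D, ∃ i,
      conn tl hd (F i) (tl e) (hd e) ∧ f ∈ F i ∧
        ¬ conn tl hd ((F i).erase f) (tl e) (hd e))) t
  have hDp0 : e0 ∈ Dp 0 := Finset.mem_singleton_self e0
  have hrule : ∀ t e, e ∈ Dp t → ∀ (i : Fin k) f, conn tl hd (F i) (tl e) (hd e) →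
      f ∈ F i → ¬ conn tl hd ((F i).erase f) (tl e) (hd e) → f ∈ Dp (t + 1) := by
    intro t e he i f h1 h2 h3
    exact Finset.mem_union_right _ (Finset.mem_filter.mpr
      ⟨Finset.mem_univ _, e, he, i, h1, h2, h3⟩)
  rcases Classical.em (∃ f, (∃ t, f ∈ Dp t) ∧ ∃ i, ¬ conn tl hd (F i) (tl f) (hd f))
    with hbad | hbad
  · -- augmenting case
    obtain ⟨f0, hf0D, i0, hbadc⟩ := hbad
    set depth : E → ℕ := fun g => sInf {t | g ∈ Dp t} with hdepth
    have hdepth_spec : ∀ g, (∃ t, g ∈ Dp t) → g ∈ Dp (depth g) := by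
      intro g h; exact Nat.sInf_mem h
    have hdepth_le : ∀ g t, g ∈ Dp t → depth g ≤ t := by
      intro g t hg; exact Nat.sInf_le hg
    -- chain construction
    have hchain : ∀ (M : ℕ) (g : E), g ∈ Dp M → depth g = M →
        ∃ (d : ℕ → E) (j : ℕ → Fin k), d 0 = e0 ∧ d M = g ∧
          (∀ s ≤ M, d s ∈ Dp s ∧ depth (d s) = s) ∧
          (∀ t < M, conn tl hd (F (j t)) (tl (d t)) (hd (d t)) ∧
            d (t + 1) ∈ F (j t) ∧
            ¬ conn tl hd ((F (j t)).erase (d (t + 1))) (tl (d t)) (hd (d t))) := by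
      intro M
      induction M with
      | zero =>
        intro g hg hd0
        have : g = e0 := Finset.mem_singleton.mp hg
        subst this
        exact ⟨fun _ => g, fun _ => i0, rfl, rfl,
          fun s hs => by
            have : s = 0 := Nat.le_zero.mp hs
            subst this; exact ⟨hg, hd0⟩,
          fun t ht => absurd ht (Nat.not_lt_zero t)⟩
      | succ M ih =>
        intro g hg hdg
        have hgM : g ∉ Dp M := by
          intro h
          have := hdepth_le g M h
          omega
        have hg' : g ∈ Dp M ∪ Finset.univ.filter (fun f => ∃ e ∈ Dp M, ∃ i,
            conn tl hd (F i) (tl e) (hd e) ∧ f ∈ F i ∧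
              ¬ conn tl hd ((F i).erase f) (tl e) (hd e)) := hg
        rcases Finset.mem_union.mp hg' with h | h
        · exact absurd h hgM
        · obtain ⟨-, e, heD, i', hconn, hmem, hbr⟩ := Finset.mem_filter.mp h
          have hde : depth e = M := by
            have h1 : depth e ≤ M := hdepth_le e M heD
            rcases Nat.lt_or_ge (depth e) M with h2 | h2
            · exfalso
              have : g ∈ Dp (depth e + 1) :=
                hrule _ e (hdepth_spec e ⟨M, heD⟩) i' g hconn hmem hbr
              have := hdepth_le g (depth e + 1) this
              omega
            · omega
          obtain ⟨d, j, hd0, hdM, hmemdep, hsteps⟩ := ih e (hde ▸ hdepth_spec e ⟨M, heD⟩) hde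
          refine ⟨Function.update d (M + 1) g, Function.update j M i', ?_, ?_, ?_, ?_⟩
          · rw [Function.update_of_ne (by omega)]; exact hd0
          · rw [Function.update_self]
          · intro s hs
            by_cases h : s = M + 1
            · subst h; rw [Function.update_self]; exact ⟨hg, hdg⟩
            · rw [Function.update_of_ne h]; exact hmemdep s (by omega)
          · intro t ht
            by_cases h : t = M
            · subst h
              have e1 : Function.update d (t + 1) g t = e := by
                rw [Function.update_of_ne (by omega), hdM]
              have e2 : Function.update d (t + 1) g (t + 1) = g := Function.update_self _ _ _
              have e3 : Function.update j t i' t = i' := Function.update_self _ _ _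
              rw [e1, e2, e3]
              exact ⟨hconn, hmem, hbr⟩
            · have h1 : Function.update j M i' t = j t := Function.update_of_ne h _ _
              have h2 : Function.update d (M + 1) g t = d t :=
                Function.update_of_ne (by omega) _ _
              have h3 : Function.update d (M + 1) g (t + 1) = d (t + 1) :=
                Function.update_of_ne (by omega) _ _
              rw [h1, h2, h3]
              exact hsteps t (by omega)
    set m := depth f0 with hm
    obtain ⟨d, j, hd0, hdm, hmemdep, hsteps⟩ := hchain m f0 (hdepth_spec f0 hf0D) rfl
    have hG := chain_aug (tl := tl) (hd := hd) m F hF hdisj d j i0 ?_ ?_ ?_ ?_ ?_ ?_ ?_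
    · obtain ⟨G, h1, h2, h3⟩ := hG
      exact ⟨G, h1, h2, by rw [h3, hd0]⟩
    · intro i'; rw [hd0]; exact hfree i'
    · intro t ht; exact (hsteps t ht).1
    · intro t ht; exact (hsteps t ht).2.1
    · intro t ht; exact (hsteps t ht).2.2
    · -- no shortcuts
      intro t s hts hsm htm hmem
      by_contra hnc
      have h1 : d s ∈ Dp (t + 1) :=
        hrule t (d t) (hmemdep t (by omega)).1 (j t) (d s) (hsteps t htm).1 hmem hnc
      have h2 := hdepth_le (d s) (t + 1) h1
      have h3 := (hmemdep s hsm).2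
      omega
    · intro t s ht hs hds
      have h1 := (hmemdep t ht).2
      have h2 := (hmemdep s hs).2
      rw [hds] at h1
      omega
    · rw [hdm]; exact hbadc
  · -- counting case: contradiction with sparsity
    exfalso
    push_neg at hbad
    have hgood : ∀ f, (∃ t, f ∈ Dp t) → ∀ i, conn tl hd (F i) (tl f) (hd f) := hbad
    letI : DecidablePred (fun f : E => ∃ t, f ∈ Dp t) := fun f => Classical.propDecidable _
    set D' : Finset E := Finset.univ.filter (fun f => ∃ t, f ∈ Dp t) with hD'
    have he0D : e0 ∈ D' := Finset.mem_filter.mpr ⟨Finset.mem_univ _, 0, hDp0⟩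
    set U : Finset (Fin n) := Finset.univ.filter (fun v => conn tl hd D' v (tl e0)) with hU
    have hUmem : ∀ v, v ∈ U ↔ conn tl hd D' v (tl e0) := by
      intro v; rw [hU]; simp
    have hte0 : tl e0 ∈ U := (hUmem _).mpr (conn_refl _)
    have hhe0 : hd e0 ∈ U := (hUmem _).mpr
      (conn_of_st ⟨e0, he0D, Or.inr ⟨rfl, rfl⟩⟩)
    -- within U, every forest connects everything to tl e0
    have key : ∀ (i : Fin k) (u : Fin n), conn tl hd D' u (tl e0) →
        conn tl hd ((F i).filter fun f => tl f ∈ U ∧ hd f ∈ U) u (tl e0) := by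
      intro i u hu
      induction hu using Relation.ReflTransGen.head_induction_on with
      | refl => exact conn_refl _
      | head hst hrest ih =>
        rename_i x c
        refine Relation.ReflTransGen.trans ?_ ih
        -- one D'-step from x to c, both in U
        have hxU : x ∈ U := (hUmem _).mpr ((conn_of_st hst).trans hrest)
        have hcU : c ∈ U := (hUmem _).mpr hrest
        obtain ⟨f, hfD, hor⟩ := hst
        have hfDp : ∃ t, f ∈ Dp t := (Finset.mem_filter.mp hfD).2
        have hconn_i : conn tl hd (F i) (tl f) (hd f) := hgood f hfDp i
        obtain ⟨P, hPFi, hPc, hPmin⟩ := exists_min_conn hconn_i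
        have hPD : P ⊆ D' := by
          intro p hp
          have hbrp := bridge_of_min (hF i) hPFi hPc hp (hPmin p hp)
          obtain ⟨t, hft⟩ := hfDp
          exact Finset.mem_filter.mpr ⟨Finset.mem_univ _,
            t + 1, hrule t f hft i p hconn_i (hPFi hp) hbrp⟩
        have hfU : tl f ∈ U ∧ hd f ∈ U := by
          rcases hor with ⟨h1, h2⟩ | ⟨h1, h2⟩
          · rw [h1, h2]; exact ⟨hxU, hcU⟩
          · rw [h1, h2]; exact ⟨hcU, hxU⟩
        have hPU : ∀ p ∈ P, tl p ∈ U ∧ hd p ∈ U := by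
          intro p hp
          have hsplit := conn_erase_split hp hPc (hPmin p hp)
          have hPe : P.erase p ⊆ D' := (Finset.erase_subset _ _).trans hPD
          rcases hsplit with ⟨h1, h2⟩ | ⟨h1, h2⟩
          · constructor
            · refine (hUmem _).mpr ?_
              exact (conn_symm (conn_mono hPe h1)).trans
                ((hUmem _).mp hfU.1)
            · refine (hUmem _).mpr ?_
              exact (conn_mono hPe h2).trans ((hUmem _).mp hfU.2)
          · constructor
            · refine (hUmem _).mpr ?_
              exact (conn_mono hPe h2).trans ((hUmem _).mp hfU.2)
            · refine (hUmem _).mpr ?_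
              exact (conn_symm (conn_mono hPe h1)).trans ((hUmem _).mp hfU.1)
        have hPsub : P ⊆ (F i).filter fun f => tl f ∈ U ∧ hd f ∈ U := by
          intro p hp
          exact Finset.mem_filter.mpr ⟨hPFi hp, hPU p hp⟩
        have hxc : conn tl hd ((F i).filter fun f => tl f ∈ U ∧ hd f ∈ U) x c := by
          rcases hor with ⟨h1, h2⟩ | ⟨h1, h2⟩
          · rw [← h1, ← h2]; exact conn_mono hPsub hPc
          · rw [← h1, ← h2]; exact conn_symm (conn_mono hPsub hPc)
        exact hxc
    have hbound : ∀ i : Fin k,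
        U.card ≤ ((F i).filter fun f => tl f ∈ U ∧ hd f ∈ U).card + 1 := by
      intro i
      exact conn_card_le hte0 (fun u hu => key i u ((hUmem _).mp hu))
    -- counting
    set S : Finset E := insert e0 (Finset.univ.biUnion F) with hS
    have he0nb : e0 ∉ Finset.univ.biUnion F := by
      intro h
      obtain ⟨i, -, hi⟩ := Finset.mem_biUnion.mp h
      exact hfree i hi
    have hSfilter : S.filter (fun e => tl e ∈ U ∧ hd e ∈ U) =
        insert e0 ((Finset.univ.biUnion F).filter (fun e => tl e ∈ U ∧ hd e ∈ U)) := by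
      rw [hS, Finset.filter_insert, if_pos ⟨hte0, hhe0⟩]
    have hbUfilter : (Finset.univ.biUnion F).filter (fun e => tl e ∈ U ∧ hd e ∈ U) =
        Finset.univ.biUnion (fun i => (F i).filter (fun e => tl e ∈ U ∧ hd e ∈ U)) :=
      Finset.filter_biUnion _ _ _
    have hcard1 : (S.filter (fun e => tl e ∈ U ∧ hd e ∈ U)).card =
        1 + ∑ i : Fin k, ((F i).filter (fun e => tl e ∈ U ∧ hd e ∈ U)).card := by
      rw [hSfilter, Finset.card_insert_of_notMem
        (fun h => he0nb (Finset.filter_subset _ _ h)), hbUfilter, Finset.card_biUnion]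
      · omega
      · intro i _ j _ hij
        exact Finset.disjoint_filter_filter (hdisj i j hij)
    have hlow : (k : ℤ) * U.card - k + 1 ≤
        (S.filter (fun e => tl e ∈ U ∧ hd e ∈ U)).card := by
      rw [hcard1]
      push_cast
      have : ∀ i : Fin k, (U.card : ℤ) - 1 ≤
          ((F i).filter (fun e => tl e ∈ U ∧ hd e ∈ U)).card := by
        intro i
        have := hbound i
        push_cast
        omega
      have hsum := Finset.sum_le_sum (fun i (_ : i ∈ Finset.univ) => this i)
      rw [Finset.sum_const, Finset.card_univ, Fintype.card_fin, nsmul_eq_mul] at hsum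
      push_cast at hsum ⊢
      linarith
    have hup := hsp U ⟨tl e0, hte0⟩
    linarith

/-- Nash-Williams style partition into `k` forests under the sparsity condition. -/
lemma partition_forests {k : ℕ} [Fintype E] (S : Finset E)
    (hsp : ∀ W : Finset (Fin n), W.Nonempty →
      ((S.filter fun e => tl e ∈ W ∧ hd e ∈ W).card : ℤ) ≤ k * W.card - k) :
    ∃ F : Fin k → Finset E, (∀ i, IsForest tl hd (F i)) ∧
      (∀ i j, i ≠ j → Disjoint (F i) (F j)) ∧ Finset.univ.biUnion F = S := by
  classical
  suffices H : ∀ (N : ℕ) (S : Finset E), S.card ≤ N →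
      (∀ W : Finset (Fin n), W.Nonempty →
        ((S.filter fun e => tl e ∈ W ∧ hd e ∈ W).card : ℤ) ≤ k * W.card - k) →
      ∃ F : Fin k → Finset E, (∀ i, IsForest tl hd (F i)) ∧
        (∀ i j, i ≠ j → Disjoint (F i) (F j)) ∧ Finset.univ.biUnion F = S by
    exact H S.card S le_rfl hsp
  intro N
  induction N with
  | zero =>
    intro S hN _
    have hS : S = ∅ := Finset.card_eq_zero.mp (Nat.le_zero.mp hN)
    subst hS
    exact ⟨fun _ => ∅, fun _ => isForest_empty, fun _ _ _ => Finset.disjoint_empty_left _,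
      by ext x; simp⟩
  | succ N ih =>
    intro S hN hsp
    rcases Finset.eq_empty_or_nonempty S with rfl | ⟨e0, he0⟩
    · exact ⟨fun _ => ∅, fun _ => isForest_empty, fun _ _ _ => Finset.disjoint_empty_left _,
        by ext x; simp⟩
    have hsp' : ∀ W : Finset (Fin n), W.Nonempty →
        (((S.erase e0).filter fun e => tl e ∈ W ∧ hd e ∈ W).card : ℤ) ≤
          k * W.card - k := by
      intro W hW
      refine le_trans ?_ (hsp W hW)
      have : ((S.erase e0).filter fun e => tl e ∈ W ∧ hd e ∈ W) ⊆
          S.filter fun e => tl e ∈ W ∧ hd e ∈ W :=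
        Finset.filter_subset_filter _ (Finset.erase_subset _ _)
      exact_mod_cast Finset.card_le_card this
    have hcard : (S.erase e0).card ≤ N := by
      rw [Finset.card_erase_of_mem he0]
      have := Finset.card_pos.mpr ⟨e0, he0⟩
      omega
    obtain ⟨F, hF, hdisj, hbU⟩ := ih (S.erase e0) hcard hsp'
    have hfree : ∀ i, e0 ∉ F i := by
      intro i hmem
      have : e0 ∈ S.erase e0 := hbU ▸ Finset.mem_biUnion.mpr ⟨i, Finset.mem_univ _, hmem⟩
      exact (Finset.notMem_erase _ _) this
    have hsp'' : ∀ W : Finset (Fin n), W.Nonempty →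
        (((insert e0 (Finset.univ.biUnion F)).filter
            fun e => tl e ∈ W ∧ hd e ∈ W).card : ℤ) ≤ k * W.card - k := by
      intro W hW
      rw [hbU, Finset.insert_erase he0]
      exact hsp W hW
    obtain ⟨G, hG1, hG2, hG3⟩ := augment F hF hdisj e0 hfree hsp''
    exact ⟨G, hG1, hG2, by rw [hG3, hbU, Finset.insert_erase he0]⟩

/-- the tight case: `k·(n-1)` edges with the sparsity condition decompose into `k`
spanning trees (in the `conn` sense). -/
lemma tight_spanning {k : ℕ} [Fintype E] (hn : 0 < n) (S : Finset E)
    (hsp : ∀ W : Finset (Fin n), W.Nonempty →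
      ((S.filter fun e => tl e ∈ W ∧ hd e ∈ W).card : ℤ) ≤ k * W.card - k)
    (hcard : S.card = k * (n - 1)) :
    ∃ F : Fin k → Finset E,
      (∀ i, (F i).card + 1 = n ∧ ∀ u v : Fin n, conn tl hd (F i) u v) ∧
      (∀ i j, i ≠ j → Disjoint (F i) (F j)) ∧ Finset.univ.biUnion F = S := by
  obtain ⟨F, hF, hdisj, hbU⟩ := partition_forests S hsp
  have hle : ∀ i, (F i).card + 1 ≤ n := by
    intro i
    have := forest_card_le (hF i)
      (fun f _ => ⟨Finset.mem_univ _, Finset.mem_univ _⟩)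
      (Finset.univ_nonempty_iff.mpr ⟨⟨0, hn⟩⟩)
    rwa [Finset.card_univ, Fintype.card_fin] at this
  have hsum : ∑ i : Fin k, (F i).card = S.card := by
    rw [← hbU]
    exact (Finset.card_biUnion (fun i _ j _ hij => hdisj i j hij)).symm
  have hcards : ∀ i, (F i).card + 1 = n := by
    by_contra hcon
    push_neg at hcon
    obtain ⟨i0, hi0⟩ := hcon
    have hlt : ∑ i : Fin k, (F i).card < ∑ _i : Fin k, (n - 1) := by
      refine Finset.sum_lt_sum (fun i _ => by have := hle i; omega)
        ⟨i0, Finset.mem_univ _, by have := hle i0; omega⟩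
    rw [Finset.sum_const, Finset.card_univ, Fintype.card_fin, smul_eq_mul] at hlt
    omega
  exact ⟨F, fun i => ⟨hcards i, conn_univ_of_forest_card (hF i) (hcards i)⟩, hdisj, hbU⟩

/-- converse counting: induced edges of a spanning `conn`-tree in `W` are at most
`|W| - 1`. -/
lemma tree_filter_card {T : Finset E} (hconn : ∀ u v : Fin n, conn tl hd T u v)
    (hcard : T.card + 1 = n) {W : Finset (Fin n)} (hW : W.Nonempty) :
    (T.filter fun e => tl e ∈ W ∧ hd e ∈ W).card + 1 ≤ W.card := by
  have hforest : IsForest tl hd T := isForest_of_conn_card hconn hcard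
  refine forest_card_le (isForest_subset (Finset.filter_subset _ _) hforest) ?_ hW
  intro f hf
  exact (Finset.mem_filter.mp hf).2

end NWaux

namespace NWaux

/-- spanning-tree partition (in `IsTreePartition` form) from the tight sparsity count -/
lemma tight_tree_partition {n : ℕ} {E : Type} [Fintype E] [DecidableEq E] (hn : 0 < n)
    (tail head : E → Fin n) (hlt : ∀ e, tail e < head e) {k : ℕ} (S : Finset E)
    (hsp : SparseOn tail head (k : ℤ) (k : ℤ) S) (hcard : S.card = k * (n - 1)) :
    IsTreePartition tail head k S := by
  obtain ⟨F, hF, hdisj, hbU⟩ := tight_spanning (tl := tail) (hd := head) hn S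
    (fun W hW => hsp W hW) hcard
  refine ⟨F, fun i => ⟨by have := (hF i).1; omega, ?_⟩, hdisj, hbU⟩
  rw [SimpleGraph.connected_iff]
  refine ⟨fun u v => (conn_iff_reachable hlt (F i) u v).mp ((hF i).2 u v), ⟨⟨0, hn⟩⟩⟩

/-- sparsity count from a spanning-tree partition -/
lemma tree_partition_sparse {n : ℕ} {E : Type} [Fintype E] [DecidableEq E] (hn : 0 < n)
    (tail head : E → Fin n) (hlt : ∀ e, tail e < head e) {k : ℕ} (S : Finset E)
    (hTP : IsTreePartition tail head k S) : SparseOn tail head (k : ℤ) (k : ℤ) S := by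
  classical
  obtain ⟨T, hT, hTd, hTu⟩ := hTP
  intro W hW
  have htree : ∀ i, (∀ u v : Fin n, conn tail head (T i) u v) ∧ (T i).card + 1 = n := by
    intro i
    have h2 : (T i).card + 1 = n := by have := (hT i).1; omega
    refine ⟨fun u v => (conn_iff_reachable hlt (T i) u v).mpr ?_, h2⟩
    exact (hT i).2.preconnected u v
  have hfilter : S.filter (fun e => tail e ∈ W ∧ head e ∈ W) =
      Finset.univ.biUnion (fun i => (T i).filter (fun e => tail e ∈ W ∧ head e ∈ W)) := by
    rw [← hTu]
    exact Finset.filter_biUnion _ _ _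
  have hcard : (S.filter (fun e => tail e ∈ W ∧ head e ∈ W)).card =
      ∑ i : Fin k, ((T i).filter (fun e => tail e ∈ W ∧ head e ∈ W)).card := by
    rw [hfilter]
    exact Finset.card_biUnion (fun i _ j _ hij =>
      Finset.disjoint_filter_filter (hTd i j hij))
  have hbound : ∀ i : Fin k,
      (((T i).filter (fun e => tail e ∈ W ∧ head e ∈ W)).card : ℤ) ≤ (W.card : ℤ) - 1 := by
    intro i
    have := tree_filter_card (htree i).1 (htree i).2 hW
    push_cast
    omega
  rw [hcard]
  push_cast
  have hsum := Finset.sum_le_sum (fun i (_ : i ∈ Finset.univ) => hbound i)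
  rw [Finset.sum_const, Finset.card_univ, Fintype.card_fin, nsmul_eq_mul] at hsum
  push_cast at hsum
  linarith

end NWaux

/-- `G` is `[a,b]`-tight iff there is `B' ⊆ B` with `R ∪ B'` the
disjoint union of `a` spanning trees and `B \ B'` the disjoint union of `b`
spanning trees. -/
theorem stmt1 {n : ℕ} {E : Type} [Fintype E] [DecidableEq E] (hn : 0 < n)
    (tail head : E → Fin n) (hlt : ∀ e, tail e < head e)
    (red : E → Bool) (a b : ℕ) (ha : 0 < a) (hb : 0 < b)
    (hE : Fintype.card E = (a + b) * n - (a + b)) :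
    (ABSparseOn tail head red a b (Finset.univ : Finset E) ∧
        Fintype.card E = (a + b) * n - (a + b)) ↔
      ∃ B' ⊆ Finset.univ.filter fun e => red e = false,
        IsTreePartition tail head a ((Finset.univ.filter fun e => red e = true) ∪ B') ∧
        IsTreePartition tail head b ((Finset.univ.filter fun e => red e = false) \ B') := by
  classical
  have hn' : (1 : ℕ) ≤ n := hn
  have hWuniv : (Finset.univ : Finset (Fin n)).Nonempty := ⟨⟨0, hn⟩, Finset.mem_univ _⟩
  -- basic facts about the red/black split
  have hdisjRBf : Disjoint (Finset.univ.filter fun e : E => red e = true)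
      (Finset.univ.filter fun e : E => red e = false) := by
    rw [Finset.disjoint_left]
    intro e he1 he2
    have h1 := (Finset.mem_filter.mp he1).2
    have h2 := (Finset.mem_filter.mp he2).2
    rw [h1] at h2
    exact Bool.noConfusion h2
  have hunionRBf : (Finset.univ.filter fun e : E => red e = true) ∪
      (Finset.univ.filter fun e : E => red e = false) = Finset.univ := by
    ext e
    simp only [Finset.mem_union, Finset.mem_filter, Finset.mem_univ, true_and, iff_true]
    cases h : red e
    · exact Or.inr rfl
    · exact Or.inl rfl
  constructor
  · rintro ⟨⟨B', hB'sub, hsp1, hsp2⟩, -⟩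
    -- the two parts and their cardinalities
    have hd12 : Disjoint ((Finset.univ.filter fun e : E => red e = true) ∪ B')
        ((Finset.univ.filter fun e : E => red e = false) \ B') := by
      refine Finset.disjoint_union_left.mpr ⟨?_, Finset.disjoint_sdiff⟩
      exact Finset.disjoint_of_subset_right (Finset.sdiff_subset) hdisjRBf
    have hu12 : ((Finset.univ.filter fun e : E => red e = true) ∪ B') ∪
        ((Finset.univ.filter fun e : E => red e = false) \ B') = Finset.univ := by
      rw [Finset.union_assoc, Finset.union_sdiff_of_subset hB'sub]
      exact hunionRBf
    have hcard12 : ((Finset.univ.filter fun e : E => red e = true) ∪ B').card +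
        ((Finset.univ.filter fun e : E => red e = false) \ B').card = Fintype.card E := by
      rw [← Finset.card_union_of_disjoint hd12, hu12, Finset.card_univ]
    -- upper bounds from sparsity at W = univ
    have hup1 := hsp1 Finset.univ hWuniv
    have hup2 := hsp2 Finset.univ hWuniv
    rw [Finset.filter_true_of_mem (fun e _ => ⟨Finset.mem_univ _, Finset.mem_univ _⟩),
      Finset.card_univ, Fintype.card_fin] at hup1 hup2
    -- total count
    have hle : a + b ≤ (a + b) * n := Nat.le_mul_of_pos_right _ hn
    have hEcast : ((Fintype.card E : ℕ) : ℤ) = ((a : ℤ) + b) * n - (a + b) := by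
      rw [hE, Nat.cast_sub hle]
      push_cast
      ring
    have hsumZ : (((Finset.univ.filter fun e : E => red e = true) ∪ B').card : ℤ) +
        (((Finset.univ.filter fun e : E => red e = false) \ B').card : ℤ) =
        ((a : ℤ) + b) * n - (a + b) := by
      rw [← hEcast]
      exact_mod_cast congrArg (fun x : ℕ => (x : ℤ)) hcard12
    have heq1 : (((Finset.univ.filter fun e : E => red e = true) ∪ B').card : ℤ) =
        (a : ℤ) * n - a := by linarith [mul_comm (a : ℤ) (n : ℤ)]
    have heq2 : ((((Finset.univ.filter fun e : E => red e = false) \ B').card : ℤ)) =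
        (b : ℤ) * n - b := by linarith
    have hcast1 : ((a * (n - 1) : ℕ) : ℤ) = (a : ℤ) * n - a := by
      rw [Nat.cast_mul, Nat.cast_sub hn']
      push_cast
      ring
    have hcast2 : ((b * (n - 1) : ℕ) : ℤ) = (b : ℤ) * n - b := by
      rw [Nat.cast_mul, Nat.cast_sub hn']
      push_cast
      ring
    have hc1 : ((Finset.univ.filter fun e : E => red e = true) ∪ B').card = a * (n - 1) :=
      Nat.cast_injective (heq1.trans hcast1.symm)
    have hc2 : ((Finset.univ.filter fun e : E => red e = false) \ B').card = b * (n - 1) :=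
      Nat.cast_injective (heq2.trans hcast2.symm)
    exact ⟨B', hB'sub,
      NWaux.tight_tree_partition hn tail head hlt _ hsp1 hc1,
      NWaux.tight_tree_partition hn tail head hlt _ hsp2 hc2⟩
  · rintro ⟨B', hsub, hTP1, hTP2⟩
    exact ⟨⟨B', hsub,
      NWaux.tree_partition_sparse hn tail head hlt _ hTP1,
      NWaux.tree_partition_sparse hn tail head hlt _ hTP2⟩, hE⟩
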